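/- Let P be an m-dimensional convex polytope with a special simplex spanned by vertices v_1,...,v_n, and let F(P)∖σ denote the complex of faces of P containing none of v_1,...,v_n. Then F(P)∖σ is a pure polytopal complex of dimension m - n. -/

import Mathlib

/-- The dimension of a subset of `ι → ℝ`, as the rank of its vector span. -/
noncomputable def pdim {ι : Type*} (S : Set (ι → ℝ)) : ℕ :=
  Module.finrank ℝ (vectorSpan ℝ S)

/-- `F` is a face of the polytope `P`. -/
def IsFaceOf {ι : Type*} (F P : Set (ι → ℝ)) : Prop :=
  F = P ∨ ∃ (f : (ι → ℝ) →ₗ[ℝ] ℝ) (c : ℝ), (∀ x ∈ P, f x ≤ c) ∧ F = {x ∈ P | f x = c}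

/-- `F` is a facet of `P`: a nonempty proper face of codimension one. -/
def IsFacetOf {ι : Type*} (F P : Set (ι → ℝ)) : Prop :=
  IsFaceOf F P ∧ F.Nonempty ∧ F ≠ P ∧ pdim F + 1 = pdim P

open Finset Module Set

variable {q : ℕ}

local notation "E" => Fin q → ℝ

section Basic

lemma faceOf_subset {F P : Set E} (h : IsFaceOf F P) : F ⊆ P := by
  rcases h with rfl | ⟨f, c, _, rfl⟩
  · exact subset_rfl
  · exact fun x hx => hx.1

lemma faceOf_self (P : Set E) : IsFaceOf P P := Or.inl rfl

lemma pdim_mono {S T : Set E} (h : S ⊆ T) : pdim S ≤ pdim T :=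
  Submodule.finrank_mono (vectorSpan_mono ℝ h)

lemma pdim_convexHull (S : Set E) : pdim (convexHull ℝ S) = pdim S := by
  unfold pdim
  have : vectorSpan ℝ (convexHull ℝ S) = vectorSpan ℝ S := by
    rw [← direction_affineSpan, affineSpan_convexHull, direction_affineSpan]
  rw [this]

/-- Key workhorse (i): a linear functional bounded on a finset is bounded on its hull. -/
lemma hull_le_of_verts_le {V : Finset E} {f : E →ₗ[ℝ] ℝ} {c : ℝ}
    (hc : ∀ v ∈ V, f v ≤ c) : ∀ x ∈ convexHull ℝ (V : Set E), f x ≤ c := by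
  have : (V : Set E) ⊆ {x | f x ≤ c} := fun v hv => hc v hv
  have h2 := convexHull_min this (convex_halfSpace_le (f.isLinear) c)
  exact fun x hx => h2 hx

/-- Key workhorse (ii): the equality set within the hull is the hull of vertex argmax. -/
lemma face_hull_eq {V : Finset E} {f : E →ₗ[ℝ] ℝ} {c : ℝ}
    (hc : ∀ v ∈ V, f v ≤ c) :
    {x ∈ convexHull ℝ (V : Set E) | f x = c}
      = convexHull ℝ ((V.filter (fun v => f v = c)) : Set E) := by
  classical
  apply Set.Subset.antisymm
  · rintro x ⟨hx, hfx⟩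
    rw [Finset.convexHull_eq] at hx
    obtain ⟨w, hw0, hw1, hwx⟩ := hx
    have hxsum : x = ∑ y ∈ V, w y • y := by
      rw [← hwx, Finset.centerMass_eq_of_sum_1 _ _ hw1]; simp
    have hfxs : f x = ∑ y ∈ V, w y * f y := by
      rw [hxsum, map_sum]; simp [map_smul, smul_eq_mul]
    -- every vertex with positive weight lies on the hyperplane
    have hsupp : ∀ y ∈ V, w y ≠ 0 → f y = c := by
      intro y hy hwy
      by_contra hne
      have hlt : f y < c := lt_of_le_of_ne (hc y hy) hne
      have hwypos : 0 < w y := lt_of_le_of_ne (hw0 y hy) (Ne.symm hwy)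
      have : ∑ z ∈ V, w z * f z < ∑ z ∈ V, w z * c := by
        apply Finset.sum_lt_sum
        · intro z hz
          exact mul_le_mul_of_nonneg_left (hc z hz) (hw0 z hz)
        · exact ⟨y, hy, by nlinarith⟩
      rw [← Finset.sum_mul, hw1, one_mul] at this
      rw [hfxs] at hfx; linarith
    have hxcm : (V.filter (fun y => w y ≠ 0)).centerMass w id = x := by
      rw [Finset.centerMass_filter_ne_zero, hwx]
    rw [← hxcm]
    apply Finset.centerMass_mem_convexHull
    · intro i hi; exact hw0 i (Finset.mem_filter.mp hi).1
    · rw [Finset.sum_filter_ne_zero, hw1]; norm_num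
    · intro i hi
      rcases Finset.mem_filter.mp hi with ⟨hiV, hiw⟩
      simp only [id_eq]
      exact Finset.mem_coe.mpr (Finset.mem_filter.mpr ⟨hiV, hsupp i hiV hiw⟩)
  · intro x hx
    constructor
    · exact convexHull_mono (by exact_mod_cast Finset.filter_subset _ V) hx
    · have h1 : ((V.filter (fun v => f v = c)) : Set E) ⊆ {y | f y = c} := by
        intro y hy
        exact (Finset.mem_filter.mp (Finset.mem_coe.mp hy)).2
      exact convexHull_min h1 (convex_hyperplane f.isLinear c) hx

end Basic

/-- A face of a polytope is the hull of the vertices it contains. -/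
lemma faceOf_eq_hull_filter {V : Finset E} {P F : Set E} [DecidablePred (fun v => v ∈ F)]
    (hP : P = convexHull ℝ (V : Set E)) (hF : IsFaceOf F P) : F = convexHull ℝ ((V.filter (fun v => v ∈ F)) : Set E) := by
  rcases hF with rfl | ⟨f, c, hb, rfl⟩
  · have : V.filter (fun v => v ∈ F) = V := by
      apply Finset.filter_true_of_mem
      intro v hv; rw [hP]; exact subset_convexHull ℝ _ hv
    rw [this, ← hP]
  · subst hP
    have hc : ∀ v ∈ V, f v ≤ c := fun v hv => hb v (subset_convexHull ℝ _ hv)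
    conv_lhs => rw [face_hull_eq hc]
    suffices h : V.filter (fun v => f v = c)
        = V.filter (fun v => v ∈ {x ∈ convexHull ℝ (V : Set E) | f x = c}) by
      rw [h]
    apply Finset.filter_congr
    intro v hv
    simp only [Set.mem_sep_iff]
    constructor
    · intro hfv; exact ⟨subset_convexHull ℝ _ hv, hfv⟩
    · rintro ⟨_, hfv⟩; exact hfv

lemma faceOf_restrict {P F G : Set E} (hF : IsFaceOf F P) (hG : IsFaceOf G P)
    (hsub : F ⊆ G) : IsFaceOf F G := by
  rcases hF with rfl | ⟨f, c, hb, rfl⟩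
  · exact Or.inl (Set.Subset.antisymm ((faceOf_subset hG)) hsub).symm
  · right
    refine ⟨f, c, fun x hx => hb x (faceOf_subset hG hx), ?_⟩
    apply Set.Subset.antisymm
    · intro x hx; exact ⟨hsub hx, hx.2⟩
    · intro x hx; exact ⟨faceOf_subset hG hx.1, hx.2⟩

lemma pdim_lt_of_proper_face {Q F : Set E} (hF : IsFaceOf F Q) (hne : F.Nonempty)
    (hneq : F ≠ Q) : pdim F < pdim Q := by
  rcases hF with rfl | ⟨f, c, hb, rfl⟩
  · exact absurd rfl hneq
  · obtain ⟨x₀, hx₀⟩ := hne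
    have hx₀Q : x₀ ∈ Q := hx₀.1
    have hfx₀ : f x₀ = c := hx₀.2
    -- there is a point of Q off the hyperplane
    have : ∃ y ∈ Q, f y ≠ c := by
      by_contra h
      push_neg at h
      exact hneq (Set.Subset.antisymm (fun x hx => hx.1) (fun y hy => ⟨hy, h y hy⟩))
    obtain ⟨y, hyQ, hfy⟩ := this
    have hker : vectorSpan ℝ {x ∈ Q | f x = c} ≤ LinearMap.ker f := by
      rw [vectorSpan_def]
      apply Submodule.span_le.mpr
      rintro z ⟨a, ha, b, hb', rfl⟩
      simp only [SetLike.mem_coe, LinearMap.mem_ker, vsub_eq_sub, map_sub]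
      rw [ha.2, hb'.2, sub_self]
    have hK : vectorSpan ℝ {x ∈ Q | f x = c} ≤ vectorSpan ℝ Q ⊓ LinearMap.ker f :=
      le_inf (vectorSpan_mono ℝ (fun x hx => hx.1)) hker
    have hlt : vectorSpan ℝ Q ⊓ LinearMap.ker f < vectorSpan ℝ Q := by
      apply lt_of_le_of_ne inf_le_left
      intro heq
      have hmem : y - x₀ ∈ vectorSpan ℝ Q := by
        have := vsub_mem_vectorSpan ℝ hyQ hx₀Q
        simpa using this
      rw [← heq] at hmem
      have : f (y - x₀) = 0 := hmem.2
      rw [map_sub, hfx₀] at this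
      apply hfy; linarith
    calc pdim {x ∈ Q | f x = c} ≤ finrank ℝ (vectorSpan ℝ Q ⊓ LinearMap.ker f : Submodule ℝ E) :=
          Submodule.finrank_mono hK
      _ < pdim Q := Submodule.finrank_lt_finrank_of_lt hlt

lemma face_eq_of_pdim_le {Q F G : Set E} (hF : IsFaceOf F Q) (hG : IsFaceOf G Q)
    (hsub : F ⊆ G) (hne : F.Nonempty) (hd : pdim G ≤ pdim F) : F = G := by
  by_contra hneq
  exact absurd hd (not_le.mpr (lt_of_lt_of_le
    (pdim_lt_of_proper_face (faceOf_restrict hF hG hsub) hne hneq) (le_refl _)))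

lemma faceOf_inter {P F G : Set E} (hF : IsFaceOf F P) (hG : IsFaceOf G P) :
    IsFaceOf (F ∩ G) P := by
  rcases hF with rfl | ⟨f, c, hbf, rfl⟩
  · rw [Set.inter_eq_right.mpr (faceOf_subset hG)]; exact hG
  · rcases hG with rfl | ⟨g, d, hbg, rfl⟩
    · rw [Set.inter_eq_left.mpr (fun x hx => hx.1)]
      exact Or.inr ⟨f, c, hbf, rfl⟩
    · right
      refine ⟨f + g, c + d, fun x hx => add_le_add (hbf x hx) (hbg x hx), ?_⟩
      ext x
      simp only [Set.mem_inter_iff, Set.mem_sep_iff, LinearMap.add_apply]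
      constructor
      · rintro ⟨⟨hxP, hfx⟩, ⟨_, hgx⟩⟩; exact ⟨hxP, by linarith⟩
      · rintro ⟨hxP, hsum⟩
        have h1 := hbf x hxP
        have h2 := hbg x hxP
        exact ⟨⟨hxP, by linarith⟩, ⟨hxP, by linarith⟩⟩

/-- A face of a face is a face (for polytopes). -/
lemma faceOf_trans {V : Finset E} {P Q G : Set E} (hP : P = convexHull ℝ (V : Set E))
    (hQ : IsFaceOf Q P) (hG : IsFaceOf G Q) : IsFaceOf G P := by
  classical
  rcases hG with rfl | ⟨g, d, hbg, rfl⟩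
  · exact hQ
  rcases hQ with rfl | ⟨f, c, hbf, rfl⟩
  · exact Or.inr ⟨g, d, hbg, rfl⟩
  subst hP
  set P := convexHull ℝ (V : Set E) with hPdef
  set Q : Set (Fin q → ℝ) := {x ∈ P | f x = c} with hQdef
  set G : Set (Fin q → ℝ) := {x ∈ Q | g x = d} with hGdef
  have hfv : ∀ v ∈ V, f v ≤ c := fun v hv => hbf v (subset_convexHull ℝ _ hv)
  set lam : ℝ := 1 + ∑ v ∈ V, max 0 ((g v - d) / (c - f v)) with hlam
  have hsum0 : (0:ℝ) ≤ ∑ v ∈ V, max 0 ((g v - d) / (c - f v)) :=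
    Finset.sum_nonneg (fun v _ => le_max_left 0 _)
  have hlampos : 0 < lam := by rw [hlam]; linarith
  have key : ∀ v ∈ V, f v < c → g v - d < lam * (c - f v) := by
    intro v hv hlt
    have hpos : 0 < c - f v := by linarith
    have h1 : (g v - d) / (c - f v) ≤ ∑ w ∈ V, max 0 ((g w - d) / (c - f w)) := by
      calc (g v - d) / (c - f v) ≤ max 0 ((g v - d) / (c - f v)) := le_max_right _ _
        _ ≤ ∑ w ∈ V, max 0 ((g w - d) / (c - f w)) :=
            Finset.single_le_sum (f := fun w => max (0:ℝ) ((g w - d) / (c - f w)))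
              (fun w _ => le_max_left 0 _) hv
    have h2 : (g v - d) / (c - f v) < lam := by rw [hlam]; linarith
    calc g v - d = ((g v - d) / (c - f v)) * (c - f v) := by field_simp
      _ < lam * (c - f v) := by apply mul_lt_mul_of_pos_right h2 hpos
  set h : (Fin q → ℝ) →ₗ[ℝ] ℝ := g + lam • f with hh
  set e : ℝ := d + lam * c with he
  have happ : ∀ x, h x = g x + lam * f x := by
    intro x; rw [hh]; simp [LinearMap.add_apply, LinearMap.smul_apply, smul_eq_mul]
  have hbv : ∀ v ∈ V, h v ≤ e := by
    intro v hv
    rcases eq_or_lt_of_le (hfv v hv) with heq | hlt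
    · have hvQ : v ∈ Q := ⟨subset_convexHull ℝ _ hv, heq⟩
      have := hbg v hvQ
      rw [happ, heq, he]; linarith
    · have := key v hv hlt
      rw [happ, he]; nlinarith
  have hb : ∀ x ∈ P, h x ≤ e := hull_le_of_verts_le hbv
  have hveq : ∀ v ∈ V, (h v = e ↔ v ∈ G) := by
    intro v hv
    constructor
    · intro hhe
      rcases eq_or_lt_of_le (hfv v hv) with heq | hlt
      · have hgv : g v = d := by rw [happ, heq, he] at hhe; linarith
        exact ⟨⟨subset_convexHull ℝ _ hv, heq⟩, hgv⟩
      · exfalso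
        have := key v hv hlt
        rw [happ, he] at hhe; nlinarith
    · rintro ⟨⟨hvP, hfc⟩, hgd⟩
      rw [happ, hfc, hgd, he]
  -- identify G with the face of h
  have hQhull : Q = convexHull ℝ ((V.filter (fun v => v ∈ Q)) : Set E) :=
    faceOf_eq_hull_filter rfl (Or.inr ⟨f, c, hbf, rfl⟩)
  have hGhull : G = convexHull ℝ (((V.filter (fun v => v ∈ Q)).filter (fun v => v ∈ G)) : Set E) :=
    faceOf_eq_hull_filter hQhull (Or.inr ⟨g, d, hbg, rfl⟩)
  have hfilter : (V.filter (fun v => v ∈ Q)).filter (fun v => v ∈ G) = V.filter (fun v => h v = e) := by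
    rw [Finset.filter_filter]
    apply Finset.filter_congr
    intro v hv
    constructor
    · rintro ⟨_, hvG⟩; exact (hveq v hv).mpr hvG
    · intro hhe
      have hvG := (hveq v hv).mp hhe
      exact ⟨hvG.1, hvG⟩
  right
  refine ⟨h, e, hb, ?_⟩
  rw [hGhull, hfilter, ← face_hull_eq hbv]

lemma pdim_hull_finset (S : Finset E) {x₀ : E} (hx₀ : x₀ ∈ S) :
    pdim (convexHull ℝ (S : Set E))
      = finrank ℝ (Submodule.span ℝ ((fun v => v - x₀) '' (S : Set E))) := by
  rw [pdim_convexHull]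
  unfold pdim
  rw [vectorSpan_eq_span_vsub_set_right ℝ (Finset.mem_coe.mpr hx₀)]
  congr 2

lemma finrank_add_dualAnnihilator (W : Submodule ℝ E) :
    finrank ℝ W + finrank ℝ W.dualAnnihilator = finrank ℝ (Fin q → ℝ) := by
  have h1 : finrank ℝ ((Fin q → ℝ) ⧸ W) = finrank ℝ W.dualAnnihilator :=
    (Subspace.quotEquivAnnihilator W).finrank_eq
  have h2 := Submodule.finrank_quotient_add_finrank W
  omega

lemma exists_good_g {S V : Finset E} (hSV : S ⊆ V) {x₀ : E} (hx₀ : x₀ ∈ S)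
    (f : (Fin q → ℝ) →ₗ[ℝ] ℝ) (hfS : ∀ v ∈ S, f v = f x₀)
    (hdim : finrank ℝ (Submodule.span ℝ ((fun v => v - x₀) '' (S : Set E))) + 2
      ≤ finrank ℝ (Submodule.span ℝ ((fun v => v - x₀) '' (V : Set E)))) :
    ∃ g : (Fin q → ℝ) →ₗ[ℝ] ℝ, (∀ v ∈ S, g v = g x₀) ∧
      ∀ t : ℝ, ∃ v ∈ V, g v + t * f v ≠ g x₀ + t * f x₀ := by
  set A := Submodule.span ℝ ((fun v => v - x₀) '' (S : Set E)) with hA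
  set B := Submodule.span ℝ ((fun v => v - x₀) '' (V : Set E)) with hB
  have hAB : A ≤ B := Submodule.span_mono (Set.image_mono (Finset.coe_subset.mpr hSV))
  have hfA : f ∈ A.dualAnnihilator := by
    rw [Submodule.mem_dualAnnihilator]
    intro w hw
    have : A ≤ LinearMap.ker f := by
      rw [hA]
      apply Submodule.span_le.mpr
      rintro z ⟨v, hv, rfl⟩
      simp only [SetLike.mem_coe, LinearMap.mem_ker, map_sub]
      rw [hfS v hv, sub_self]
    exact this hw
  set X := B.dualAnnihilator ⊔ (Submodule.span ℝ {f}) with hX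
  have hXA : X ≤ A.dualAnnihilator := by
    apply sup_le
    · exact Submodule.dualAnnihilator_anti hAB
    · rw [Submodule.span_le, Set.singleton_subset_iff]; exact hfA
  have hrank : finrank ℝ X < finrank ℝ A.dualAnnihilator := by
    have h1 : finrank ℝ X ≤ finrank ℝ B.dualAnnihilator + 1 := by
      have hsing : finrank ℝ (Submodule.span ℝ ({f} : Set ((Fin q → ℝ) →ₗ[ℝ] ℝ))) ≤ 1 := by
        rcases eq_or_ne f 0 with rfl | hf0
        · rw [Submodule.span_zero_singleton]; simp
        · rw [finrank_span_singleton hf0]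
      calc finrank ℝ X ≤ finrank ℝ B.dualAnnihilator + finrank ℝ (Submodule.span ℝ {f}) :=
            Submodule.finrank_add_le_finrank_add_finrank _ _
        _ ≤ finrank ℝ B.dualAnnihilator + 1 := by omega
    have h2 := finrank_add_dualAnnihilator A
    have h3 := finrank_add_dualAnnihilator B
    omega
  have hlt : X < A.dualAnnihilator := lt_of_le_of_ne hXA (by
    intro heq; rw [heq] at hrank; omega)
  obtain ⟨g, hgA, hgX⟩ := SetLike.exists_of_lt hlt
  refine ⟨g, ?_, ?_⟩
  · intro v hv
    have hmem : v - x₀ ∈ A := Submodule.subset_span ⟨v, Finset.mem_coe.mpr hv, rfl⟩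
    rw [Submodule.mem_dualAnnihilator] at hgA
    have := hgA _ hmem
    rw [map_sub] at this; linarith
  · intro t
    by_contra hcon
    push_neg at hcon
    apply hgX
    have hmem : g + t • f ∈ B.dualAnnihilator := by
      rw [Submodule.mem_dualAnnihilator]
      intro w hw
      have : B ≤ LinearMap.ker (g + t • f) := by
        rw [hB]
        apply Submodule.span_le.mpr
        rintro z ⟨v, hv, rfl⟩
        simp only [SetLike.mem_coe, LinearMap.mem_ker, map_sub, LinearMap.add_apply,
          LinearMap.smul_apply, smul_eq_mul]
        have := hcon v (Finset.mem_coe.mp hv)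
        linarith
      exact this hw
    have h1 : g + t • f ∈ X := Submodule.mem_sup_left hmem
    have h2 : t • f ∈ X :=
      Submodule.mem_sup_right (Submodule.smul_mem _ t (Submodule.mem_span_singleton_self f))
    have := Submodule.sub_mem X h1 h2
    simpa using this

/-- Rotation lemma: a nonempty face of codimension ≥ 2 is not maximal among proper faces. -/
lemma exists_larger_face {V : Finset E} {P G : Set E} (hP : P = convexHull ℝ (V : Set E))
    (hG : IsFaceOf G P) (hne : G.Nonempty) (hdim : pdim G + 2 ≤ pdim P) :
    ∃ G₂, IsFaceOf G₂ P ∧ G ⊆ G₂ ∧ G₂ ≠ G ∧ G₂ ≠ P := by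
  classical
  subst hP
  rcases hG with rfl | ⟨f, c, hbf, rfl⟩
  · omega
  set P := convexHull ℝ (V : Set E) with hPdef
  have hfv : ∀ v ∈ V, f v ≤ c := fun v hv => hbf v (subset_convexHull ℝ _ hv)
  set S : Finset (Fin q → ℝ) := V.filter (fun v => f v = c) with hS
  have hGhull : {x ∈ P | f x = c} = convexHull ℝ (S : Set E) := face_hull_eq hfv
  have hSne : S.Nonempty := by
    by_contra hcon
    rw [Finset.not_nonempty_iff_eq_empty] at hcon
    rw [hGhull, hcon] at hne
    simp at hne
  obtain ⟨x₀, hx₀S⟩ := hSne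
  have hx₀V : x₀ ∈ V := (Finset.mem_filter.mp hx₀S).1
  have hfx₀ : f x₀ = c := (Finset.mem_filter.mp hx₀S).2
  have hSV : S ⊆ V := Finset.filter_subset _ _
  -- dimension hypotheses in span form
  have hdG : pdim {x ∈ P | f x = c}
      = finrank ℝ (Submodule.span ℝ ((fun v => v - x₀) '' (S : Set E))) := by
    rw [hGhull]; exact pdim_hull_finset S hx₀S
  have hdP : pdim P = finrank ℝ (Submodule.span ℝ ((fun v => v - x₀) '' (V : Set E))) :=
    pdim_hull_finset V hx₀V
  have hfconst : ∀ v ∈ S, f v = f x₀ := by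
    intro v hv; rw [hfx₀]; exact (Finset.mem_filter.mp hv).2
  obtain ⟨g, hgS, hgood⟩ := exists_good_g hSV hx₀S f hfconst (by omega)
  -- the vertices strictly below the hyperplane
  set W' : Finset (Fin q → ℝ) := V.filter (fun v => f v ≠ c) with hW'
  have hW'ne : W'.Nonempty := by
    by_contra hcon
    rw [Finset.not_nonempty_iff_eq_empty, Finset.filter_eq_empty_iff] at hcon
    push_neg at hcon
    have : S = V := by
      apply Finset.Subset.antisymm hSV
      intro v hv; exact Finset.mem_filter.mpr ⟨hv, hcon hv⟩
    rw [this] at hdG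
    omega
  set t : ℝ := W'.sup' hW'ne (fun w => (g w - g x₀) / (c - f w)) with ht
  set h : (Fin q → ℝ) →ₗ[ℝ] ℝ := g + t • f with hh
  set e : ℝ := g x₀ + t * c with he
  have happ : ∀ x, h x = g x + t * f x := by
    intro x; rw [hh]; simp [LinearMap.add_apply, LinearMap.smul_apply, smul_eq_mul]
  have hvle : ∀ v ∈ V, h v ≤ e := by
    intro v hv
    rcases eq_or_ne (f v) c with heq | hneq
    · have hvS : v ∈ S := Finset.mem_filter.mpr ⟨hv, heq⟩
      rw [happ, heq, hgS v hvS, he]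
    · have hvW' : v ∈ W' := Finset.mem_filter.mpr ⟨hv, hneq⟩
      have hlt : f v < c := lt_of_le_of_ne (hfv v hv) hneq
      have hpos : 0 < c - f v := by linarith
      have hle : (g v - g x₀) / (c - f v) ≤ t :=
        Finset.le_sup' (fun w => (g w - g x₀) / (c - f w)) hvW'
      have : g v - g x₀ ≤ t * (c - f v) := by
        rw [div_le_iff₀ hpos] at hle; linarith
      rw [happ, he]; nlinarith
  refine ⟨{x ∈ P | h x = e}, Or.inr ⟨h, e, hull_le_of_verts_le hvle, rfl⟩, ?_, ?_, ?_⟩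
  · -- G ⊆ G₂
    intro x hx
    refine ⟨hx.1, ?_⟩
    have hgx : g x = g x₀ := by
      have hsub : {x ∈ P | f x = c} ⊆ {y | g y = g x₀} := by
        rw [hGhull]
        apply convexHull_min _ (convex_hyperplane g.isLinear (g x₀))
        intro v hv; exact hgS v (Finset.mem_coe.mp hv)
      exact hsub hx
    rw [happ, hgx, hx.2, he]
  · -- G₂ ≠ G : some vertex attaining the sup is in G₂ but not G
    obtain ⟨w₀, hw₀W', hw₀eq⟩ := Finset.exists_mem_eq_sup' hW'ne (fun w => (g w - g x₀) / (c - f w))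
    have hw₀V : w₀ ∈ V := (Finset.mem_filter.mp hw₀W').1
    have hw₀ne : f w₀ ≠ c := (Finset.mem_filter.mp hw₀W').2
    have hpos : 0 < c - f w₀ := by
      have := lt_of_le_of_ne (hfv w₀ hw₀V) hw₀ne; linarith
    have hw₀G₂ : w₀ ∈ {x ∈ P | h x = e} := by
      refine ⟨subset_convexHull ℝ _ hw₀V, ?_⟩
      have : g w₀ - g x₀ = t * (c - f w₀) := by
        rw [ht, hw₀eq]; field_simp
      rw [happ, he]; nlinarith
    intro hcon
    rw [hcon] at hw₀G₂
    exact hw₀ne hw₀G₂.2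
  · -- G₂ ≠ P : a vertex misses the level
    obtain ⟨v, hvV, hvne⟩ := hgood t
    have : h v ≠ e := by rw [happ, he, ← hfx₀]; exact hvne
    intro hcon
    have hvP : v ∈ P := subset_convexHull ℝ _ hvV
    rw [← hcon] at hvP
    exact this hvP.2

/-- Every nonempty proper face is contained in a facet. -/
lemma exists_facet_containing {V : Finset E} {P F : Set E} (hP : P = convexHull ℝ (V : Set E))
    (hF : IsFaceOf F P) (hne : F.Nonempty) (hneq : F ≠ P) :
    ∃ G, IsFacetOf G P ∧ F ⊆ G := by
  classical
  set T : Set (Set (Fin q → ℝ)) := {G | IsFaceOf G P ∧ F ⊆ G ∧ G ≠ P} with hT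
  have hTfin : T.Finite := by
    apply Set.Finite.subset (Set.Finite.image (fun s : Finset (Fin q → ℝ) =>
      convexHull ℝ (s : Set (Fin q → ℝ))) (V.powerset : Finset (Finset (Fin q → ℝ))).finite_toSet)
    rintro G ⟨hGf, _, _⟩
    exact ⟨V.filter (fun v => v ∈ G), Finset.mem_coe.mpr (Finset.mem_powerset.mpr
      (Finset.filter_subset _ _)), (faceOf_eq_hull_filter hP hGf).symm⟩
  have hTne : T.Nonempty := ⟨F, hF, subset_rfl, hneq⟩
  obtain ⟨G, hGT, hmax⟩ := Set.Finite.exists_maximalFor id T hTfin hTne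
  obtain ⟨hGface, hFG, hGneP⟩ := hGT
  have hGne : G.Nonempty := hne.mono hFG
  have hlt : pdim G < pdim P := pdim_lt_of_proper_face hGface hGne hGneP
  rcases eq_or_ne (pdim G + 1) (pdim P) with heq | hneq2
  · exact ⟨G, ⟨hGface, hGne, hGneP, heq⟩, hFG⟩
  · exfalso
    have hdim2 : pdim G + 2 ≤ pdim P := by omega
    obtain ⟨G₂, hG₂face, hGG₂, hG₂ne, hG₂neP⟩ := exists_larger_face hP hGface hGne hdim2
    have hG₂T : G₂ ∈ T := ⟨hG₂face, hFG.trans hGG₂, hG₂neP⟩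
    exact hG₂ne (le_antisymm (hmax hG₂T hGG₂) hGG₂)

/-- Ridge lemma: a facet `G'` of a facet `G` of `Q` is the intersection of `G` with
another facet of `Q`. -/
lemma ridge_lemma {W : Finset E} {Q G G' : Set E} (hQ : Q = convexHull ℝ (W : Set E))
    (hG : IsFacetOf G Q) (hG' : IsFacetOf G' G) :
    ∃ G₂, IsFacetOf G₂ Q ∧ G₂ ∩ G = G' := by
  classical
  obtain ⟨hGface, hGne, hGneQ, hGdim⟩ := hG
  obtain ⟨hG'face, hG'ne, hG'neG, hG'dim⟩ := hG'
  have hG'G : G' ⊆ G := faceOf_subset hG'face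
  have hGQ : G ⊆ Q := faceOf_subset hGface
  have hG'Qface : IsFaceOf G' Q := faceOf_trans hQ hGface hG'face
  have hG'neQ : G' ≠ Q := by
    intro hcon
    exact hGneQ (Set.Subset.antisymm hGQ (hcon ▸ hG'G))
  -- functional for G'
  have hkex : ∃ (k : (Fin q → ℝ) →ₗ[ℝ] ℝ) (e : ℝ), (∀ x ∈ Q, k x ≤ e) ∧ G' = {x ∈ Q | k x = e} :=
    hG'Qface.resolve_left hG'neQ
  obtain ⟨k, e, hbk, hG'eq⟩ := hkex
  -- functional for G
  obtain ⟨f, c, hbf, hGeq⟩ := hGface.resolve_left hGneQ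
  subst hQ
  set Q := convexHull ℝ (W : Set E) with hQdef
  have hfw : ∀ v ∈ W, f v ≤ c := fun v hv => hbf v (subset_convexHull ℝ _ hv)
  have hkw : ∀ v ∈ W, k v ≤ e := fun v hv => hbk v (subset_convexHull ℝ _ hv)
  have hmemG : ∀ v ∈ W, (v ∈ G ↔ f v = c) := by
    intro v hv
    rw [hGeq]
    exact ⟨fun h => h.2, fun h => ⟨subset_convexHull ℝ _ hv, h⟩⟩
  have hmemG' : ∀ v ∈ W, (v ∈ G' ↔ k v = e) := by
    intro v hv
    rw [hG'eq]
    exact ⟨fun h => h.2, fun h => ⟨subset_convexHull ℝ _ hv, h⟩⟩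
  -- vertices of G strictly outside G'
  have hSS' : ∃ v ∈ W, f v = c ∧ k v ≠ e := by
    by_contra hcon
    push_neg at hcon
    apply hG'neG
    apply Set.Subset.antisymm hG'G
    -- G = hull of its vertices, all of which are in G'
    have hGhull : G = convexHull ℝ ((W.filter (fun v => v ∈ G)) : Set E) :=
      faceOf_eq_hull_filter rfl hGface
    rw [hGhull]
    apply convexHull_min _ (by
      rw [hG'eq]
      apply Convex.inter (convex_convexHull ℝ _) (convex_hyperplane k.isLinear e))
    intro v hv
    obtain ⟨hvW, hvG⟩ := Finset.mem_filter.mp (Finset.mem_coe.mp hv)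
    have hfvc : f v = c := (hmemG v hvW).mp hvG
    exact (hmemG' v hvW).mpr (hcon v hvW hfvc)
  -- vertices outside G
  have hWS : ∃ v ∈ W, f v ≠ c := by
    by_contra hcon
    push_neg at hcon
    apply hGneQ
    rw [hGeq]
    apply Set.Subset.antisymm (fun x hx => hx.1)
    intro x hx
    refine ⟨hx, ?_⟩
    have h1 : ∀ v ∈ W, v ∈ ({y | f y = c} : Set _) := fun v hv => hcon v hv
    have h2 := convexHull_min (fun v hv => h1 v (Finset.mem_coe.mp hv))
      (convex_hyperplane f.isLinear c)
    exact h2 hx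
  -- outside-G vertices are strictly below both levels
  have hstrict : ∀ v ∈ W, f v ≠ c → (f v < c ∧ k v < e) := by
    intro v hv hne
    refine ⟨lt_of_le_of_ne (hfw v hv) hne, ?_⟩
    apply lt_of_le_of_ne (hkw v hv)
    intro hke
    have : v ∈ G' := (hmemG' v hv).mpr hke
    exact hne ((hmemG v hv).mp (hG'G this))
  set WS : Finset (Fin q → ℝ) := W.filter (fun v => f v ≠ c) with hWS'
  have hWSne : WS.Nonempty := by
    obtain ⟨v, hv, hvne⟩ := hWS
    exact ⟨v, Finset.mem_filter.mpr ⟨hv, hvne⟩⟩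
  set t : ℝ := WS.inf' hWSne (fun w => (e - k w) / (c - f w)) with ht
  set h : (Fin q → ℝ) →ₗ[ℝ] ℝ := k - t • f with hh
  set e' : ℝ := e - t * c with he'
  have happ : ∀ x, h x = k x - t * f x := by
    intro x; rw [hh]; simp [LinearMap.sub_apply, LinearMap.smul_apply, smul_eq_mul]
  have hvle : ∀ v ∈ W, h v ≤ e' := by
    intro v hv
    rcases eq_or_ne (f v) c with heq | hne
    · rw [happ, heq, he']
      have := hkw v hv; linarith
    · obtain ⟨hflt, hklt⟩ := hstrict v hv hne
      have hpos : 0 < c - f v := by linarith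
      have hle : t ≤ (e - k v) / (c - f v) :=
        Finset.inf'_le (fun w => (e - k w) / (c - f w)) (Finset.mem_filter.mpr ⟨hv, hne⟩)
      have : t * (c - f v) ≤ e - k v := by
        rw [le_div_iff₀ hpos] at hle; linarith
      rw [happ, he']; nlinarith
  set F₂ : Set (Fin q → ℝ) := {x ∈ Q | h x = e'} with hF₂
  have hF₂face : IsFaceOf F₂ Q := Or.inr ⟨h, e', hull_le_of_verts_le hvle, rfl⟩
  have hG'F₂ : G' ⊆ F₂ := by
    intro x hx
    have hxG : x ∈ G := hG'G hx
    have hfxc : f x = c := by rw [hGeq] at hxG; exact hxG.2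
    have hkxe : k x = e := by rw [hG'eq] at hx; exact hx.2
    exact ⟨hGQ hxG, by rw [happ, hfxc, hkxe, he']⟩
  obtain ⟨w₀, hw₀WS, hw₀eq⟩ := Finset.exists_mem_eq_inf' hWSne (fun w => (e - k w) / (c - f w))
  have hw₀W : w₀ ∈ W := (Finset.mem_filter.mp hw₀WS).1
  have hw₀ne : f w₀ ≠ c := (Finset.mem_filter.mp hw₀WS).2
  have hw₀pos : 0 < c - f w₀ := by
    have := (hstrict w₀ hw₀W hw₀ne).1; linarith
  have hw₀F₂ : w₀ ∈ F₂ := by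
    refine ⟨subset_convexHull ℝ _ hw₀W, ?_⟩
    have : e - k w₀ = t * (c - f w₀) := by
      rw [ht, hw₀eq]; field_simp
    rw [happ, he']; nlinarith
  have hw₀nG : w₀ ∉ G := fun hcon => hw₀ne ((hmemG w₀ hw₀W).mp hcon)
  have hF₂ne : F₂.Nonempty := ⟨w₀, hw₀F₂⟩
  have hF₂neQ : F₂ ≠ Q := by
    obtain ⟨v₁, hv₁W, hv₁f, hv₁k⟩ := hSS'
    have hklt : k v₁ < e := lt_of_le_of_ne (hkw v₁ hv₁W) hv₁k
    intro hcon
    have hv₁Q : v₁ ∈ Q := subset_convexHull ℝ _ hv₁W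
    rw [← hcon] at hv₁Q
    have := hv₁Q.2
    rw [happ, hv₁f, he'] at this
    linarith
  obtain ⟨G₂, hG₂facet, hF₂G₂⟩ := exists_facet_containing rfl hF₂face hF₂ne hF₂neQ
  refine ⟨G₂, hG₂facet, ?_⟩
  -- G₂ ∩ G is a face squeezed between G' and G
  have hinterface : IsFaceOf (G₂ ∩ G) Q := faceOf_inter hG₂facet.1 hGface
  have hG'sub : G' ⊆ G₂ ∩ G := fun x hx => ⟨hF₂G₂ (hG'F₂ hx), hG'G hx⟩
  have hsubG : G₂ ∩ G ⊆ G := Set.inter_subset_right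
  have hG₂dim : pdim G₂ + 1 = pdim Q := hG₂facet.2.2.2
  have hnotGsub : ¬ (G ⊆ G₂) := by
    intro hcon
    have hGG₂ : G = G₂ := face_eq_of_pdim_le hGface hG₂facet.1 hcon hGne (by omega)
    rw [← hGG₂] at hF₂G₂
    exact hw₀nG (hF₂G₂ hw₀F₂)
  -- pdim of the intersection is pdim G' or pdim G
  have hd1 : pdim G' ≤ pdim (G₂ ∩ G) := pdim_mono hG'sub
  have hd2 : pdim (G₂ ∩ G) ≤ pdim G := pdim_mono hsubG
  rcases eq_or_ne (pdim (G₂ ∩ G)) (pdim G') with heq | hne2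
  · exact (face_eq_of_pdim_le hG'Qface hinterface hG'sub hG'ne (by omega)).symm
  · exfalso
    have heqG : pdim (G₂ ∩ G) = pdim G := by omega
    have : G₂ ∩ G = G := face_eq_of_pdim_le hinterface hGface hsubG
      (hG'ne.mono hG'sub) (by omega)
    exact hnotGsub (by rw [← this]; exact Set.inter_subset_left)

/-- A nonempty proper face contains every point lying in all facets containing the face. -/
lemma mem_of_mem_all_facets : ∀ N : ℕ, ∀ (V : Finset E) (P F : Set E), pdim P ≤ N →
    P = convexHull ℝ (V : Set E) → IsFaceOf F P → F.Nonempty → F ≠ P →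
    ∀ x, (∀ G, IsFacetOf G P → F ⊆ G → x ∈ G) → x ∈ F := by
  intro N
  induction N with
  | zero =>
    intro V P F hdim hP hF hne hneq x hx
    obtain ⟨G, hGfacet, _⟩ := exists_facet_containing hP hF hne hneq
    have := hGfacet.2.2.2
    omega
  | succ N ih =>
    intro V P F hdim hP hF hne hneq x hx
    classical
    obtain ⟨G, hGfacet, hFG⟩ := exists_facet_containing hP hF hne hneq
    have hxG : x ∈ G := hx G hGfacet hFG
    rcases eq_or_ne F G with rfl | hneFG
    · exact hxG
    · have hFfaceG : IsFaceOf F G := faceOf_restrict hF hGfacet.1 hFG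
      have hGhull : G = convexHull ℝ ((V.filter (fun v => v ∈ G)) : Set E) :=
        faceOf_eq_hull_filter hP hGfacet.1
      have hGdim : pdim G ≤ N := by
        have := hGfacet.2.2.2; omega
      apply ih (V.filter (fun v => v ∈ G)) G F hGdim hGhull hFfaceG hne hneFG x
      intro G' hG'facet hFG'
      obtain ⟨G₂, hG₂facet, hG₂G⟩ := ridge_lemma hP hGfacet hG'facet
      have hG'G₂ : G' ⊆ G₂ := by rw [← hG₂G]; exact Set.inter_subset_left
      have hxG₂ : x ∈ G₂ := hx G₂ hG₂facet (hFG'.trans hG'G₂)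
      rw [← hG₂G]
      exact ⟨hxG₂, hxG⟩

/-- Given a point `y` outside a nonempty proper face `F`, there is a facet containing `F`
and avoiding `y`. -/
lemma exists_facet_avoiding {V : Finset E} {P F : Set E} (hP : P = convexHull ℝ (V : Set E))
    (hF : IsFaceOf F P) (hne : F.Nonempty) (hneq : F ≠ P) {y : Fin q → ℝ} (hy : y ∉ F) :
    ∃ G, IsFacetOf G P ∧ F ⊆ G ∧ y ∉ G := by
  by_contra hcon
  push_neg at hcon
  exact hy (mem_of_mem_all_facets (pdim P) V P F le_rfl hP hF hne hneq y
    (fun G hG hFG => hcon G hG hFG))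

/-- A facet of a face of `P` is the intersection of that face with a facet of `P`. -/
lemma facet_of_face_eq_inter {V : Finset E} {P Q Q' : Set E} (hP : P = convexHull ℝ (V : Set E))
    (hQ : IsFaceOf Q P) (hQ' : IsFacetOf Q' Q) :
    ∃ G₂, IsFacetOf G₂ P ∧ Q ∩ G₂ = Q' := by
  obtain ⟨hQ'face, hQ'ne, hQ'neQ, hQ'dim⟩ := hQ'
  have hQ'Q : Q' ⊆ Q := faceOf_subset hQ'face
  rcases eq_or_ne Q P with rfl | hQneP
  · refine ⟨Q', ⟨hQ'face, hQ'ne, hQ'neQ, hQ'dim⟩, Set.inter_eq_right.mpr hQ'Q⟩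
  · have hQ'P : IsFaceOf Q' P := faceOf_trans hP hQ hQ'face
    have hQ'neP : Q' ≠ P := by
      intro hcon
      exact hQneP (Set.Subset.antisymm (faceOf_subset hQ) (hcon ▸ hQ'Q))
    obtain ⟨y, hyQ, hyQ'⟩ := Set.not_subset.mp (fun hsub => hQ'neQ
      (Set.Subset.antisymm hQ'Q hsub))
    obtain ⟨G₂, hG₂facet, hQ'G₂, hyG₂⟩ := exists_facet_avoiding hP hQ'P hQ'ne hQ'neP hyQ'
    refine ⟨G₂, hG₂facet, ?_⟩
    have hinterface : IsFaceOf (Q ∩ G₂) P := faceOf_inter hQ hG₂facet.1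
    have hsub1 : Q' ⊆ Q ∩ G₂ := fun z hz => ⟨hQ'Q hz, hQ'G₂ hz⟩
    have hsub2 : Q ∩ G₂ ⊆ Q := Set.inter_subset_left
    have hd1 : pdim Q' ≤ pdim (Q ∩ G₂) := pdim_mono hsub1
    have hd2 : pdim (Q ∩ G₂) ≤ pdim Q := pdim_mono hsub2
    rcases eq_or_ne (pdim (Q ∩ G₂)) (pdim Q) with heq | hne2
    · exfalso
      have : Q ∩ G₂ = Q := face_eq_of_pdim_le hinterface hQ hsub2
        (hQ'ne.mono hsub1) (by omega)
      apply hyG₂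
      rw [← this] at hyQ
      exact hyQ.2
    · exact (face_eq_of_pdim_le hQ'P hinterface hsub1 hQ'ne (by omega)).symm

theorem faces_avoiding_special_simplex_pure' {q m n : ℕ}
    (V : Finset (Fin q → ℝ)) (P : Set (Fin q → ℝ))
    (hP : P = convexHull ℝ (V : Set (Fin q → ℝ))) (hdim : pdim P = m)
    (v : Fin n → (Fin q → ℝ))
    (hvert : ∀ i, v i ∈ Set.extremePoints ℝ P) (hinj : Function.Injective v)
    (hspecial : ∀ F, IsFacetOf F P → Nat.card {i : Fin n // v i ∈ F} = n - 1) :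
    ∀ F, IsFaceOf F P → F.Nonempty → (∀ i, v i ∉ F) →
      ∃ G, IsFaceOf G P ∧ G.Nonempty ∧ (∀ i, v i ∉ G) ∧ F ⊆ G ∧ pdim G = m - n := by
  classical
  intro F hFface hFne hFavoid
  have main : ∀ d k (Q : Set (Fin q → ℝ)), k + d = n → IsFaceOf Q P → pdim Q + k = m →
      (Finset.univ.filter (fun i => v i ∉ Q)).card = k → F ⊆ Q →
      ∃ G, IsFaceOf G P ∧ (∀ i, v i ∉ G) ∧ F ⊆ G ∧ pdim G + n = m := by
    intro d
    induction d with
    | zero =>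
      intro k Q hkd hQface hQdim hQcard hFQ
      have hkn : k = n := by omega
      subst hkn
      have hfilt : Finset.univ.filter (fun i => v i ∉ Q) = Finset.univ := by
        apply Finset.eq_univ_of_card
        rw [hQcard, Fintype.card_fin]
      refine ⟨Q, hQface, ?_, hFQ, by omega⟩
      intro i
      have : i ∈ Finset.univ.filter (fun j => v j ∉ Q) := by rw [hfilt]; exact Finset.mem_univ i
      exact (Finset.mem_filter.mp this).2
    | succ d ih =>
      intro k Q hkd hQface hQdim hQcard hFQ
      have hkn : k < n := by omega
      -- some special vertex is in Q
      have hex : ∃ i₀, v i₀ ∈ Q := by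
        by_contra hcon
        push_neg at hcon
        have : Finset.univ.filter (fun i => v i ∉ Q) = Finset.univ :=
          Finset.filter_true_of_mem (fun i _ => hcon i)
        rw [this, Finset.card_univ, Fintype.card_fin] at hQcard
        omega
      obtain ⟨i₀, hi₀Q⟩ := hex
      have hFneQ : F ≠ Q := by
        intro hcon
        exact hFavoid i₀ (hcon ▸ hi₀Q)
      have hFfaceQ : IsFaceOf F Q := faceOf_restrict hFface hQface hFQ
      have hQhull : Q = convexHull ℝ ((V.filter (fun w => w ∈ Q)) : Set (Fin q → ℝ)) :=
        faceOf_eq_hull_filter hP hQface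
      obtain ⟨Q', hQ'facet, hFQ', hi₀Q'⟩ :=
        exists_facet_avoiding hQhull hFfaceQ hFne hFneQ (hFavoid i₀)
      obtain ⟨G₂, hG₂facet, hQG₂⟩ := facet_of_face_eq_inter hP hQface hQ'facet
      -- G₂ misses exactly one special vertex, namely i₀
      have hcardin : (Finset.univ.filter (fun i => v i ∈ G₂)).card = n - 1 := by
        have := hspecial G₂ hG₂facet
        rw [Nat.card_eq_fintype_card, Fintype.card_subtype] at this
        exact this
      have hcardout : (Finset.univ.filter (fun i => v i ∉ G₂)).card = 1 := by
        have htot := Finset.card_filter_add_card_filter_not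
          (s := (Finset.univ : Finset (Fin n))) (p := fun i => v i ∈ G₂)
        rw [Finset.card_univ, Fintype.card_fin, hcardin] at htot
        omega
      have hi₀G₂ : v i₀ ∉ G₂ := by
        intro hcon
        exact hi₀Q' (hQG₂ ▸ ⟨hi₀Q, hcon⟩)
      have hmissG₂ : Finset.univ.filter (fun i => v i ∉ G₂) = {i₀} := by
        obtain ⟨a, ha⟩ := Finset.card_eq_one.mp hcardout
        have hi₀mem : i₀ ∈ Finset.univ.filter (fun i => v i ∉ G₂) :=
          Finset.mem_filter.mpr ⟨Finset.mem_univ _, hi₀G₂⟩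
        rw [ha] at hi₀mem ⊢
        rw [Finset.mem_singleton.mp hi₀mem]
      -- the missing set of Q' is that of Q plus i₀
      have hmissQ' : Finset.univ.filter (fun i => v i ∉ Q')
          = insert i₀ (Finset.univ.filter (fun i => v i ∉ Q)) := by
        ext i
        simp only [Finset.mem_filter, Finset.mem_univ, true_and, Finset.mem_insert]
        constructor
        · intro hi
          rw [← hQG₂] at hi
          rcases Classical.em (v i ∈ Q) with hq | hq
          · rcases Classical.em (v i ∈ G₂) with hg | hg
            · exact absurd ⟨hq, hg⟩ hi
            · left
              have : i ∈ Finset.univ.filter (fun j => v j ∉ G₂) :=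
                Finset.mem_filter.mpr ⟨Finset.mem_univ _, hg⟩
              rw [hmissG₂, Finset.mem_singleton] at this
              exact this
          · right; exact hq
        · intro hi
          rcases hi with rfl | hi
          · exact hi₀Q'
          · rw [← hQG₂]; intro hcon; exact hi hcon.1
      have hi₀notin : i₀ ∉ Finset.univ.filter (fun i => v i ∉ Q) := by
        simp only [Finset.mem_filter, Finset.mem_univ, true_and, not_not]
        exact hi₀Q
      have hQ'card : (Finset.univ.filter (fun i => v i ∉ Q')).card = k + 1 := by
        rw [hmissQ', Finset.card_insert_of_notMem hi₀notin, hQcard]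
      have hQ'face : IsFaceOf Q' P := by
        rw [← hQG₂]
        exact faceOf_inter hQface hG₂facet.1
      have hQ'dim : pdim Q' + (k + 1) = m := by
        have := hQ'facet.2.2.2
        omega
      exact ih (k + 1) Q' (by omega) hQ'face hQ'dim hQ'card hFQ'
  have hmiss0 : (Finset.univ.filter (fun i => v i ∉ P)).card = 0 := by
    rw [Finset.card_eq_zero, Finset.filter_eq_empty_iff]
    intro i _
    simp only [not_not]
    exact extremePoints_subset (hvert i)
  obtain ⟨G, hGface, hGavoid, hFG, hGdim⟩ :=
    main n 0 P (by omega) (faceOf_self P) (by omega) hmiss0 (faceOf_subset hFface)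
  exact ⟨G, hGface, hFne.mono hFG, hGavoid, hFG, by omega⟩

/-- If `v 0, …, v (n-1)` span a special simplex in the `m`-dimensional polytope `P`, then
the complex `F(P) ∖ σ` of faces of `P` containing none of the `v i` is pure of dimension
`m - n`: every such (nonempty) face is contained in one of dimension `m - n`. -/
theorem faces_avoiding_special_simplex_pure {q m n : ℕ}
    (V : Finset (Fin q → ℝ)) (P : Set (Fin q → ℝ))
    (hP : P = convexHull ℝ (V : Set (Fin q → ℝ))) (hdim : pdim P = m)
    (v : Fin n → (Fin q → ℝ))
    (hvert : ∀ i, v i ∈ Set.extremePoints ℝ P) (hinj : Function.Injective v)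
    (hspecial : ∀ F, IsFacetOf F P → Nat.card {i : Fin n // v i ∈ F} = n - 1) :
    ∀ F, IsFaceOf F P → F.Nonempty → (∀ i, v i ∉ F) →
      ∃ G, IsFaceOf G P ∧ G.Nonempty ∧ (∀ i, v i ∉ G) ∧ F ⊆ G ∧ pdim G = m - n := by
  exact faces_avoiding_special_simplex_pure' V P hP hdim v hvert hinj hspecial
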